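/- Let Σ be a finite set, let c_1,…,c_n : Σ → ℂ, and set d := n − dim span{c_1,…,c_n}. Fix an integer a ≥ 1 and let 𝒜 be a family of a-element subsets A of {1,…,n} such that for every A ∈ 𝒜 the supports of the functions c_i, i ∈ A, are pairwise disjoint. Then the dimension of the space of linear relations {λ : 𝒜 → ℂ | ∑_{A∈𝒜} λ_A Φ_A = 0} is at most binom(n+a−1, a) − binom(n+a−d−1, a). (Theorem 2: if the codimension of the 1-magnon states is d, the codimension of the a-magnon states is at most this binomial difference.) -/

import Mathlib

/-- The localized `a`-magnon product state `Φ(c_1,…,c_a)` as a function on finite subsets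
of `Σ` (an element of `H_a`). -/
noncomputable def magnon {σ : Type*} [Fintype σ] [DecidableEq σ]
    {ι : Type*} [Fintype ι] [DecidableEq ι] (c : ι → σ → ℂ) : Finset σ → ℂ :=
  fun S => ∑ g : ι → σ,
    if Function.Injective g ∧ Finset.image g Finset.univ = S then ∏ j, c j (g j) else 0

/-- For an `a`-element subset `A ⊆ {1,…,n}` of indices, `Φ_A := Φ((c_i)_{i ∈ A})`. -/
noncomputable def magnonSet {σ : Type*} [Fintype σ] [DecidableEq σ] {n : ℕ}
    (c : Fin n → σ → ℂ) (A : Finset (Fin n)) : Finset σ → ℂ :=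
  magnon (fun i : ↥A => c i.1)


open Finset

namespace MagnonAux

variable {σ : Type*} [Fintype σ] [DecidableEq σ] {n a : ℕ}

/-- The full symmetric tensor attached to a multiset of indices, as a function on `σ^a`. -/
noncomputable def psiFun (c : Fin n → σ → ℂ) (m : Sym (Fin n) a) : (Fin a → σ) → ℂ :=
  fun μ => ∑ h : Fin a → Fin n,
    if Multiset.map h Finset.univ.val = (m : Multiset (Fin n)) then ∏ j, c (h j) (μ j) else 0

variable {A : Finset (Fin n)}

lemma mem_of_map_eq {h : Fin a → Fin n} (hh : Multiset.map h Finset.univ.val = A.val)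
    (j : Fin a) : h j ∈ A := by
  rw [Finset.mem_def, ← hh]
  exact Multiset.mem_map_of_mem _ (Finset.mem_def.mp (Finset.mem_univ j))

lemma image_eq_of_map_eq {h : Fin a → Fin n} (hh : Multiset.map h Finset.univ.val = A.val) :
    Finset.image h Finset.univ = A := by
  apply Finset.val_injective
  rw [Finset.image_val, hh]
  exact Multiset.dedup_eq_self.mpr A.nodup

lemma inj_of_map_eq (hA : A.card = a) {h : Fin a → Fin n}
    (hh : Multiset.map h Finset.univ.val = A.val) : Function.Injective h := by
  have himg := image_eq_of_map_eq hh
  have hcard : (Finset.image h Finset.univ).card = (Finset.univ : Finset (Fin a)).card := by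
    rw [himg, hA, Finset.card_univ, Fintype.card_fin]
  have hinj := Finset.card_image_iff.mp hcard
  intro x y hxy
  exact hinj (by simp) (by simp) hxy

/-- The equivalence `Fin a ≃ ↥A` induced by `h` when the multiset of values of `h` is `A.val`. -/
noncomputable def eqvOf (hA : A.card = a) {h : Fin a → Fin n}
    (hh : Multiset.map h Finset.univ.val = A.val) : Fin a ≃ ↥A :=
  Equiv.ofBijective (fun j => ⟨h j, mem_of_map_eq hh j⟩)
    ((Fintype.bijective_iff_injective_and_card _).mpr
      ⟨fun x y hxy => inj_of_map_eq hA hh (congrArg Subtype.val hxy),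
        by simp [Fintype.card_coe, hA]⟩)

@[simp] lemma eqvOf_apply (hA : A.card = a) {h : Fin a → Fin n}
    (hh : Multiset.map h Finset.univ.val = A.val) (j : Fin a) :
    ((eqvOf hA hh j : ↥A) : Fin n) = h j := rfl

lemma map_coe_equiv (E : Fin a ≃ ↥A) :
    Multiset.map (fun j => ((E j : ↥A) : Fin n)) Finset.univ.val = A.val := by
  have h1 : Multiset.map (fun j => ((E j : ↥A) : Fin n)) Finset.univ.val
      = Multiset.map Subtype.val (Multiset.map (⇑E) Finset.univ.val) := by
    rw [Multiset.map_map]; rfl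
  have h2 : Multiset.map (⇑E) Finset.univ.val = (Finset.univ : Finset ↥A).val := by
    have h3 := congrArg Finset.val (Finset.image_univ_equiv E)
    rw [Finset.image_val] at h3
    rwa [Multiset.dedup_eq_self.mpr (Multiset.Nodup.map E.injective Finset.univ.nodup)] at h3
  rw [h1, h2, Finset.univ_eq_attach]
  exact Multiset.attach_map_val A.val

/-- L1 : `psiFun` as a sum over equivalences. -/
lemma psiFun_eq_sum_equiv (c : Fin n → σ → ℂ) (hA : Multiset.card A.val = a) (μ : Fin a → σ) :
    psiFun c ⟨A.val, hA⟩ μ = ∑ E : Fin a ≃ ↥A, ∏ j, c ((E j : ↥A) : Fin n) (μ j) := by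
  classical
  have hA' : A.card = a := hA
  show (∑ h : Fin a → Fin n,
    if Multiset.map h Finset.univ.val = A.val then ∏ j, c (h j) (μ j) else 0) = _
  rw [← Finset.sum_filter]
  refine Finset.sum_bij' (fun h hh => eqvOf hA' (Finset.mem_filter.mp hh).2)
    (fun E _ => fun j => ((E j : ↥A) : Fin n)) ?_ ?_ ?_ ?_ ?_
  · intro h hh; exact Finset.mem_univ _
  · intro E _; exact Finset.mem_filter.mpr ⟨Finset.mem_univ _, map_coe_equiv E⟩
  · intro h hh; rfl
  · intro E _
    ext j
    simp [eqvOf]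
  · intro h hh; rfl

end MagnonAux
namespace MagnonAux

variable {σ : Type*} [Fintype σ] [DecidableEq σ] {n a : ℕ} {A : Finset (Fin n)}

lemma card_image_inj {μ : Fin a → σ} (hμ : Function.Injective μ) :
    (Finset.image μ Finset.univ).card = a := by
  rw [Finset.card_image_of_injective _ hμ, Finset.card_univ, Fintype.card_fin]

/-- The equivalence attached to an injective `g : ↥A → σ` with the same image as `μ`. -/
noncomputable def eqvOf2 (hA : A.card = a) {μ : Fin a → σ} (hμ : Function.Injective μ)
    {g : ↥A → σ} (hg1 : Function.Injective g)
    (hg2 : Finset.image g Finset.univ = Finset.image μ Finset.univ) : Fin a ≃ ↥A :=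
  (Equiv.ofBijective (fun j => (⟨μ j, Finset.mem_image_of_mem μ (Finset.mem_univ j)⟩ :
      ↥(Finset.image μ Finset.univ)))
    ((Fintype.bijective_iff_injective_and_card _).mpr
      ⟨fun x y hxy => hμ (congrArg Subtype.val hxy),
        by rw [Fintype.card_fin, Fintype.card_coe, card_image_inj hμ]⟩)).trans
  (Equiv.ofBijective (fun i => (⟨g i, hg2 ▸ Finset.mem_image_of_mem g (Finset.mem_univ i)⟩ :
      ↥(Finset.image μ Finset.univ)))
    ((Fintype.bijective_iff_injective_and_card _).mpr
      ⟨fun x y hxy => hg1 (congrArg Subtype.val hxy),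
        by rw [Fintype.card_coe, Fintype.card_coe, card_image_inj hμ, hA]⟩)).symm

lemma eqvOf2_spec (hA : A.card = a) {μ : Fin a → σ} (hμ : Function.Injective μ)
    {g : ↥A → σ} (hg1 : Function.Injective g)
    (hg2 : Finset.image g Finset.univ = Finset.image μ Finset.univ) (j : Fin a) :
    g (eqvOf2 hA hμ hg1 hg2 j) = μ j := by
  exact congrArg Subtype.val
    ((Equiv.ofBijective (fun i => (⟨g i, hg2 ▸ Finset.mem_image_of_mem g (Finset.mem_univ i)⟩ :
      ↥(Finset.image μ Finset.univ)))
    ((Fintype.bijective_iff_injective_and_card _).mpr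
      ⟨fun x y hxy => hg1 (congrArg Subtype.val hxy),
        by rw [Fintype.card_coe, Fintype.card_coe, card_image_inj hμ, hA]⟩)).apply_symm_apply
      ⟨μ j, Finset.mem_image_of_mem μ (Finset.mem_univ j)⟩)

/-- L2 : the magnon state evaluated at the image of an injective tuple. -/
lemma magnonSet_image_eq (c : Fin n → σ → ℂ) (hA : A.card = a) {μ : Fin a → σ}
    (hμ : Function.Injective μ) :
    magnonSet c A (Finset.image μ Finset.univ)
      = ∑ E : Fin a ≃ ↥A, ∏ j, c ((E j : ↥A) : Fin n) (μ j) := by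
  classical
  rw [magnonSet, magnon, ← Finset.sum_filter]
  refine Finset.sum_bij' (fun g hg => eqvOf2 hA hμ (Finset.mem_filter.mp hg).2.1
      (Finset.mem_filter.mp hg).2.2)
    (fun E _ => fun i => μ (E.symm i)) ?_ ?_ ?_ ?_ ?_
  · intro g hg; exact Finset.mem_univ _
  · intro E _
    refine Finset.mem_filter.mpr ⟨Finset.mem_univ _, hμ.comp E.symm.injective, ?_⟩
    show Finset.image (μ ∘ ⇑E.symm) Finset.univ = Finset.image μ Finset.univ
    rw [← Finset.image_image, Finset.image_univ_equiv]
  · intro g hg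
    funext i
    have h1 := eqvOf2_spec hA hμ (Finset.mem_filter.mp hg).2.1 (Finset.mem_filter.mp hg).2.2
      ((eqvOf2 hA hμ (Finset.mem_filter.mp hg).2.1 (Finset.mem_filter.mp hg).2.2).symm i)
    rw [Equiv.apply_symm_apply] at h1
    exact h1.symm
  · intro E hE
    apply Equiv.ext; intro j
    apply E.symm.injective
    have himg : Finset.image (fun i : ↥A => μ (E.symm i)) Finset.univ
        = Finset.image μ Finset.univ := by
      rw [show (fun i : ↥A => μ (E.symm i)) = μ ∘ ⇑E.symm from rfl, ← Finset.image_image,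
        Finset.image_univ_equiv]
    have h1 : μ (E.symm (eqvOf2 hA hμ (hμ.comp E.symm.injective) himg j)) = μ j :=
      eqvOf2_spec hA hμ (hμ.comp E.symm.injective) himg j
    have h2 : E.symm (eqvOf2 hA hμ (hμ.comp E.symm.injective) himg j) = j := hμ h1
    exact h2.trans (E.symm_apply_apply j).symm
  · intro g hg
    rw [← Equiv.prod_comp (eqvOf2 hA hμ (Finset.mem_filter.mp hg).2.1
      (Finset.mem_filter.mp hg).2.2) (fun i : ↥A => c (i : Fin n) (g i))]
    refine Finset.prod_congr rfl fun j _ => ?_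
    have hsp := eqvOf2_spec hA hμ (Finset.mem_filter.mp hg).2.1 (Finset.mem_filter.mp hg).2.2 j
    rw [hsp]

/-- L3 : the symmetric tensor vanishes on non-injective tuples (disjoint supports). -/
lemma sum_equiv_eq_zero {c : Fin n → σ → ℂ}
    (hdisjA : ∀ i ∈ A, ∀ j ∈ A, i ≠ j →
      Disjoint (Function.support (c i)) (Function.support (c j)))
    {μ : Fin a → σ} (hμ : ¬ Function.Injective μ) :
    ∑ E : Fin a ≃ ↥A, ∏ j, c ((E j : ↥A) : Fin n) (μ j) = 0 := by
  apply Finset.sum_eq_zero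
  intro E _
  obtain ⟨x, y, hxy, hne⟩ := Function.not_injective_iff.mp hμ
  have hEne : ((E x : ↥A) : Fin n) ≠ ((E y : ↥A) : Fin n) :=
    fun hc => hne (E.injective (Subtype.ext hc))
  have hdis := hdisjA _ (E x).2 _ (E y).2 hEne
  have hor : c ((E x : ↥A) : Fin n) (μ x) = 0 ∨ c ((E y : ↥A) : Fin n) (μ y) = 0 := by
    by_contra hc
    push_neg at hc
    exact Set.disjoint_left.mp hdis hc.1 (by rw [Function.mem_support, hxy]; exact hc.2)
  rcases hor with h0 | h0
  · exact Finset.prod_eq_zero (Finset.mem_univ x) h0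
  · exact Finset.prod_eq_zero (Finset.mem_univ y) h0

end MagnonAux
namespace MagnonAux

variable {σ : Type*} [Fintype σ] [DecidableEq σ] {n a : ℕ}

lemma exists_fn_of_sym {ι : Type*} (m : Sym ι a) :
    ∃ h : Fin a → ι, Multiset.map h Finset.univ.val = (m : Multiset ι) := by
  obtain ⟨l, hl⟩ := Quot.exists_rep (m : Multiset ι)
  have hlen : l.length = a := by
    have h2 : Multiset.card (m : Multiset ι) = a := m.2
    rw [← hl] at h2
    exact h2
  have hofn : List.ofFn (fun j : Fin a => l.get (Fin.cast hlen.symm j)) = l := by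
    apply List.ext_get (by simpa using hlen.symm)
    intro i h1 h2
    simp
  refine ⟨fun j => l.get (Fin.cast hlen.symm j), ?_⟩
  have huval : (Finset.univ : Finset (Fin a)).val = ↑(List.finRange a) := by
    rw [Fin.univ_def]
  rw [huval, Multiset.map_coe, ← List.ofFn_eq_map, hofn]
  exact hl

lemma indep (c : Fin n → σ → ℂ) {ι : Type*} [Fintype ι] [DecidableEq ι]
    (idx : ι → Fin n) (hidx : Function.Injective idx)
    (φ : ι → ((σ → ℂ) →ₗ[ℂ] ℂ)) (hφ : ∀ k l, φ k (c (idx l)) = if k = l then 1 else 0) :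
    LinearIndependent ℂ (fun m : Sym ι a => psiFun c (Sym.map idx m)) := by
  classical
  rw [Fintype.linearIndependent_iff]
  intro α hrel m₀
  obtain ⟨h', hh'⟩ := exists_fn_of_sym m₀
  set w : ι → σ → ℂ := fun k ν => φ k (fun x => if ν = x then 1 else 0) with hw_def
  have hw : ∀ (k : ι) (f : σ → ℂ), ∑ ν, f ν * w k ν = φ k f := by
    intro k f
    conv_rhs => rw [pi_eq_sum_univ f]
    rw [map_sum]
    refine Finset.sum_congr rfl fun ν _ => ?_
    rw [map_smul, smul_eq_mul]
  have key : ∀ m : Sym ι a,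
      (∑ μ : Fin a → σ, psiFun c (Sym.map idx m) μ * ∏ j, w (h' j) (μ j))
        = if m = m₀ then 1 else 0 := by
    intro m
    have step1 : ∀ μ : Fin a → σ, psiFun c (Sym.map idx m) μ * ∏ j, w (h' j) (μ j)
        = ∑ h : Fin a → Fin n,
            if Multiset.map h Finset.univ.val = Multiset.map idx (m : Multiset ι)
            then ∏ j, (c (h j) (μ j) * w (h' j) (μ j)) else 0 := by
      intro μ
      rw [psiFun, Finset.sum_mul]
      refine Finset.sum_congr rfl fun h _ => ?_
      rw [Sym.coe_map, ite_mul, zero_mul, ← Finset.prod_mul_distrib]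
    rw [Finset.sum_congr rfl fun μ _ => step1 μ, Finset.sum_comm]
    have step2 : ∀ h : Fin a → Fin n,
        (∑ μ : Fin a → σ,
          if Multiset.map h Finset.univ.val = Multiset.map idx (m : Multiset ι)
          then ∏ j, (c (h j) (μ j) * w (h' j) (μ j)) else 0)
        = if Multiset.map h Finset.univ.val = Multiset.map idx (m : Multiset ι)
            then ∏ j, φ (h' j) (c (h j)) else 0 := by
      intro h
      split_ifs with hcond
      · have hps := Finset.prod_univ_sum (fun _ : Fin a => (Finset.univ : Finset σ))
          (fun j ν => c (h j) ν * w (h' j) ν)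
        rw [Fintype.piFinset_univ] at hps
        rw [← hps]
        exact Finset.prod_congr rfl fun j _ => hw (h' j) (c (h j))
      · simp
    rw [Finset.sum_congr rfl fun h _ => step2 h]
    have step3 : ∀ h : Fin a → Fin n,
        (if Multiset.map h Finset.univ.val = Multiset.map idx (m : Multiset ι)
          then ∏ j, φ (h' j) (c (h j)) else 0)
        = if Multiset.map h Finset.univ.val = Multiset.map idx (m : Multiset ι)
            then (if idx ∘ h' = h then 1 else 0) else 0 := by
      intro h
      by_cases hcond : Multiset.map h Finset.univ.val = Multiset.map idx (m : Multiset ι)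
      · rw [if_pos hcond, if_pos hcond]
        have hex : ∀ j : Fin a, ∃ k, idx k = h j := by
          intro j
          have hmem : h j ∈ Multiset.map idx (m : Multiset ι) := by
            rw [← hcond]
            exact Multiset.mem_map_of_mem _ (Finset.mem_def.mp (Finset.mem_univ j))
          obtain ⟨k, _, hk⟩ := Multiset.mem_map.mp hmem
          exact ⟨k, hk⟩
        have hfac : ∀ j : Fin a, φ (h' j) (c (h j)) = if idx (h' j) = h j then 1 else 0 := by
          intro j
          obtain ⟨k, hk⟩ := hex j
          rw [← hk, hφ]
          simp [hidx.eq_iff]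
        rw [Finset.prod_congr rfl fun j _ => hfac j, Finset.prod_boole]
        have hiff2 : (∀ j ∈ Finset.univ, idx (h' j) = h j) ↔ idx ∘ h' = h := by
          simp [funext_iff, Function.comp]
        simp only [hiff2]
      · rw [if_neg hcond, if_neg hcond]
    rw [Finset.sum_congr rfl fun h _ => step3 h]
    rw [Finset.sum_eq_single (idx ∘ h')]
    · have hiff : (Multiset.map (idx ∘ h') Finset.univ.val
          = Multiset.map idx (m : Multiset ι)) ↔ m = m₀ := by
        rw [show Multiset.map (idx ∘ h') Finset.univ.val
            = Multiset.map idx (Multiset.map h' Finset.univ.val) from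
          (Multiset.map_map idx h' _).symm, hh', (Multiset.map_injective hidx).eq_iff]
        constructor
        · intro hh
          exact Subtype.ext hh.symm
        · intro hh
          rw [hh]
      rw [if_congr hiff rfl rfl]
      simp
    · intro b _ hb
      simp [Ne.symm hb]
    · intro hb
      exact absurd (Finset.mem_univ _) hb
  have hzero : ∀ μ : Fin a → σ,
      (∑ m : Sym ι a, α m • psiFun c (Sym.map idx m)) μ = 0 := by
    intro μ
    rw [hrel]
    rfl
  have hfin : (0 : ℂ) = ∑ m : Sym ι a, α m * (if m = m₀ then 1 else 0) := by
    calc (0 : ℂ)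
        = ∑ μ : Fin a → σ,
            (∑ m : Sym ι a, α m • psiFun c (Sym.map idx m)) μ * ∏ j, w (h' j) (μ j) := by
          simp [hzero]
      _ = ∑ μ : Fin a → σ, ∑ m : Sym ι a,
            α m * (psiFun c (Sym.map idx m) μ * ∏ j, w (h' j) (μ j)) := by
          refine Finset.sum_congr rfl fun μ _ => ?_
          rw [Finset.sum_apply, Finset.sum_mul]
          refine Finset.sum_congr rfl fun m _ => ?_
          rw [Pi.smul_apply, smul_eq_mul, mul_assoc]
      _ = ∑ m : Sym ι a, ∑ μ : Fin a → σ,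
            α m * (psiFun c (Sym.map idx m) μ * ∏ j, w (h' j) (μ j)) := Finset.sum_comm
      _ = ∑ m : Sym ι a, α m * (if m = m₀ then 1 else 0) := by
          refine Finset.sum_congr rfl fun m _ => ?_
          rw [← Finset.mul_sum, key m]
  have h2 := hfin
  simp only [mul_ite, mul_one, mul_zero, Finset.sum_ite_eq', Finset.mem_univ, if_true] at h2
  exact h2.symm

end MagnonAux

/-- Theorem 2: if `d = n − dim span{c_1,…,c_n}` is the codimension of the 1-magnon states,
then the space of linear relations between the `a`-magnon states `(Φ_A)_{A ∈ 𝒜}` has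
dimension at most `binom(n+a−1, a) − binom(n+a−d−1, a)`. -/
theorem codim_magnon_le
    {σ : Type*} [Fintype σ] [DecidableEq σ] {n a : ℕ} (ha : 1 ≤ a)
    (c : Fin n → σ → ℂ)
    (d : ℕ) (hd : d = n - Module.finrank ℂ (Submodule.span ℂ (Set.range c)))
    (𝒜 : Finset (Finset (Fin n)))
    (hcard : ∀ A ∈ 𝒜, A.card = a)
    (hdisj : ∀ A ∈ 𝒜, ∀ i ∈ A, ∀ j ∈ A, i ≠ j →
      Disjoint (Function.support (c i)) (Function.support (c j))) :
    Module.finrank ℂ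
      ↥(LinearMap.ker (Fintype.linearCombination ℂ (fun A : 𝒜 => magnonSet c A.1)))
      ≤ (n + a - 1).choose a - (n + a - d - 1).choose a := by
  classical
  set r := Module.finrank ℂ (Submodule.span ℂ (Set.range c)) with hr
  set L := (Fintype.linearCombination ℂ (fun A : 𝒜 => magnonSet c A.1)) with hL
  have hcard' : ∀ A : 𝒜, Multiset.card (A.1.val) = a := fun A => hcard A.1 A.2
  set e : 𝒜 → Sym (Fin n) a := fun A => ⟨A.1.val, hcard' A⟩ with he_def
  have he : Function.Injective e := by
    intro A B hAB
    apply Subtype.ext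
    apply Finset.val_injective
    exact congrArg Subtype.val hAB
  set Pi2 : (Sym (Fin n) a → ℂ) →ₗ[ℂ] ((Fin a → σ) → ℂ) :=
    Fintype.linearCombination ℂ (MagnonAux.psiFun c) with hPi2
  set Θ : (↥𝒜 → ℂ) →ₗ[ℂ] (Sym (Fin n) a → ℂ) :=
    Fintype.linearCombination ℂ (fun A : 𝒜 => Pi.single (e A) (1 : ℂ)) with hΘdef
  have hPisingle : ∀ x : Sym (Fin n) a, Pi2 (Pi.single x 1) = MagnonAux.psiFun c x := by
    intro x
    rw [hPi2, Fintype.linearCombination_apply]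
    rw [Finset.sum_eq_single x]
    · simp
    · intro b _ hb
      rw [Pi.single_eq_of_ne hb, zero_smul]
    · intro hx
      exact absurd (Finset.mem_univ _) hx
  have hΘev : ∀ (x : ↥𝒜 → ℂ) (A₀ : ↥𝒜), Θ x (e A₀) = x A₀ := by
    intro x A₀
    rw [hΘdef, Fintype.linearCombination_apply, Finset.sum_apply]
    rw [Finset.sum_eq_single A₀]
    · simp
    · intro b _ hb
      have hne : e A₀ ≠ e b := fun hc => hb (he hc.symm)
      rw [Pi.smul_apply, Pi.single_eq_of_ne hne, smul_zero]
    · intro hx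
      exact absurd (Finset.mem_univ _) hx
  have hΘinj : Function.Injective Θ := by
    intro x y hxy
    funext A₀
    rw [← hΘev x A₀, ← hΘev y A₀, hxy]
  have hmaps : ∀ lam ∈ LinearMap.ker L, Θ lam ∈ LinearMap.ker Pi2 := by
    intro lam hlam
    rw [LinearMap.mem_ker]
    have hsum : Pi2 (Θ lam) = ∑ A : 𝒜, lam A • MagnonAux.psiFun c (e A) := by
      have h1 : Θ lam = ∑ A : 𝒜, lam A • (Pi.single (e A) (1 : ℂ) : Sym (Fin n) a → ℂ) :=
        Fintype.linearCombination_apply ℂ _ lam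
      rw [h1, map_sum Pi2 _ Finset.univ]
      refine Finset.sum_congr rfl fun A _ => ?_
      rw [map_smul, hPisingle]
    rw [hsum]
    have hLz : ∑ A : 𝒜, lam A • magnonSet c A.1 = 0 := by
      have h0 := LinearMap.mem_ker.mp hlam
      rwa [hL, Fintype.linearCombination_apply] at h0
    funext μ
    rw [Finset.sum_apply, Pi.zero_apply]
    by_cases hμ : Function.Injective μ
    · have heval : ∀ A : 𝒜, MagnonAux.psiFun c (e A) μ
          = magnonSet c A.1 (Finset.image μ Finset.univ) := by
        intro A
        rw [he_def]
        rw [MagnonAux.psiFun_eq_sum_equiv c (hcard' A) μ]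
        rw [← MagnonAux.magnonSet_image_eq c (hcard A.1 A.2) hμ]
      calc ∑ A : 𝒜, (lam A • MagnonAux.psiFun c (e A)) μ
          = ∑ A : 𝒜, lam A • magnonSet c A.1 (Finset.image μ Finset.univ) := by
            refine Finset.sum_congr rfl fun A _ => ?_
            rw [Pi.smul_apply, heval A]
        _ = (∑ A : 𝒜, lam A • magnonSet c A.1) (Finset.image μ Finset.univ) := by
            rw [Finset.sum_apply]
            exact Finset.sum_congr rfl fun A _ => rfl
        _ = 0 := by rw [hLz]; rfl
    · refine Finset.sum_eq_zero fun A _ => ?_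
      rw [Pi.smul_apply, he_def, MagnonAux.psiFun_eq_sum_equiv c (hcard' A) μ,
        MagnonAux.sum_equiv_eq_zero (hdisj A.1 A.2) hμ, smul_zero]
  have hfk : Module.finrank ℂ ↥(LinearMap.ker L) ≤ Module.finrank ℂ ↥(LinearMap.ker Pi2) := by
    have hinj : Function.Injective (Θ.restrict hmaps) := by
      intro x y hxy
      apply Subtype.ext
      apply hΘinj
      have h1 := congrArg Subtype.val hxy
      exact h1
    exact LinearMap.finrank_le_finrank_of_injective hinj
  -- rank-nullity
  have h2 : Module.finrank ℂ ↥(LinearMap.range Pi2) + Module.finrank ℂ ↥(LinearMap.ker Pi2)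
      = (n + a - 1).choose a := by
    rw [LinearMap.finrank_range_add_finrank_ker]
    rw [Module.finrank_fintype_fun_eq_card, Sym.card_sym_eq_choose, Fintype.card_fin]
  -- independent subfamily of the c's
  obtain ⟨b, hbsub, hbspan, hbli⟩ := exists_linearIndependent ℂ (Set.range c)
  haveI : Fintype ↥b := ((Set.finite_range c).subset hbsub).fintype
  have hidx_ex : ∀ x : ↥b, ∃ i, c i = (x : σ → ℂ) := fun x => hbsub x.2
  choose idx hidxc using hidx_ex
  have hidx : Function.Injective idx := by
    intro x y hxy
    apply Subtype.ext
    rw [← hidxc x, ← hidxc y, hxy]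
  have hφ_ex : ∀ k : ↥b, ∃ φk : (σ → ℂ) →ₗ[ℂ] ℂ,
      ∀ l, φk (c (idx l)) = if k = l then 1 else 0 := by
    intro k
    obtain ⟨g, hg⟩ := LinearMap.exists_extend ((Module.Basis.span hbli).coord k)
    refine ⟨g, fun l => ?_⟩
    have h1 : c (idx l) = ((Module.Basis.span hbli) l : σ → ℂ) := by
      rw [hidxc l, Module.Basis.span_apply]
    rw [h1]
    have h2 : g ↑((Module.Basis.span hbli) l) = ((Module.Basis.span hbli).coord k) ((Module.Basis.span hbli) l) := by
      rw [← hg]; rfl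
    rw [h2, Module.Basis.coord_apply, Module.Basis.repr_self, Finsupp.single_apply]
    simp [eq_comm]
  choose φ hφ using hφ_ex
  have hindep := MagnonAux.indep (a := a) c idx hidx φ hφ
  have hmem : ∀ m : Sym ↥b a, MagnonAux.psiFun c (Sym.map idx m) ∈ LinearMap.range Pi2 :=
    fun m => ⟨Pi.single (Sym.map idx m) 1, hPisingle _⟩
  have hli2 : LinearIndependent ℂ (fun m : Sym ↥b a =>
      (⟨MagnonAux.psiFun c (Sym.map idx m), hmem m⟩ : ↥(LinearMap.range Pi2))) := by
    apply LinearIndependent.of_comp (LinearMap.range Pi2).subtype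
    exact hindep
  have h3 : Fintype.card (Sym ↥b a) ≤ Module.finrank ℂ ↥(LinearMap.range Pi2) :=
    hli2.fintype_card_le_finrank
  have hcardb : Fintype.card ↥b = r := by
    rw [hr, ← hbspan, finrank_span_set_eq_card hbli, Set.toFinset_card]
  have h4 : Fintype.card (Sym ↥b a) = (r + a - 1).choose a := by
    rw [Sym.card_sym_eq_choose, hcardb]
  rw [h4] at h3
  have hrn : r ≤ n := by
    rw [hr]
    have h5 := finrank_span_le_card (R := ℂ) (Set.range c)
    have h6 : (Set.range c).toFinset.card ≤ n := by
      rw [Set.toFinset_card]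
      calc Fintype.card ↥(Set.range c) ≤ Fintype.card (Fin n) := Fintype.card_range_le c
        _ = n := Fintype.card_fin n
    exact h5.trans h6
  have harith : n + a - d - 1 = r + a - 1 := by omega
  rw [harith]
  omega
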